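/- Let C be a small category, Y a simplicial set, and δ a twisted structure on C with coefficients in Y. Then the twisted face maps d_i^δ on the graded collection {Y_n × N(C)_n} satisfy the Δ-identity: for all n ≥ 2 and all 0 ≤ j ≤ i ≤ n−1, d_i^δ ∘ d_j^δ = d_j^δ ∘ d_{i+1}^δ as maps Y_n × N(C)_n → Y_{n−2} × N(C)_{n−2}. -/

import Mathlib

open CategoryTheory Simplicial

universe u

/-- The `i`-th vertex of an `n`-simplex of the nerve of a small category `C`. -/
def nerveVertex {C : Type u} [SmallCategory C] {n : ℕ}
    (σ : nerve C _⦋n⦌) (i : Fin (n + 1)) : C :=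
  σ.obj i

/-- The twisted face map `d_i^δ : Y_{n+1} × N(C)_{n+1} → Y_n × N(C)_n`,
`d_i^δ(y, σ) = (δ_{v_i}(d_i y), d_i σ)` where `v_i` is the `i`-th vertex of `σ`. -/
def twistedFace {C : Type u} [SmallCategory C] (Y : SSet.{u})
    (δ : C → (Y ⟶ Y)) {n : ℕ} (i : Fin (n + 2)) :
    Y _⦋n + 1⦌ × nerve C _⦋n + 1⦌ → Y _⦋n⦌ × nerve C _⦋n⦌ :=
  fun p => ((δ (nerveVertex p.2 i)).app (Opposite.op (SimplexCategory.mk n)) (Y.δ i p.1),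
    (nerve C).δ i p.2)

/-- for a twisted structure `δ` on a small category `C` with coefficients in a
simplicial set `Y`, the twisted face maps on `{Y_n × N(C)_n}` satisfy the Δ-identity
`d_i^δ ∘ d_j^δ = d_j^δ ∘ d_{i+1}^δ` for `0 ≤ j ≤ i ≤ n − 1` (maps out of level `n ≥ 2`;
here the ambient level is `n + 2` and `i, j : Fin (n + 2)` range over `0, …, n + 1`). -/
theorem twistedFace_delta_identity {C : Type u} [SmallCategory C] (Y : SSet.{u})
    (δ : C → (Y ⟶ Y))
    (hcomm : ∀ v w : C, (Nonempty (v ⟶ w) ∨ Nonempty (w ⟶ v)) →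
      δ v ≫ δ w = δ w ≫ δ v)
    {n : ℕ} (i j : Fin (n + 2)) (hij : j ≤ i) :
    (twistedFace Y δ i) ∘ (twistedFace Y δ j.castSucc) =
      (twistedFace Y δ j) ∘ (twistedFace Y δ i.succ) := by
  funext p
  obtain ⟨y, σ⟩ := p
  simp only [Function.comp, twistedFace, nerveVertex]
  have hv1 : (((nerve C).δ j.castSucc) σ).obj i = σ.obj i.succ := by
    have h : Fin.succAbove j.castSucc i = i.succ :=
      Fin.succAbove_of_le_castSucc _ _ (Fin.castSucc_le_castSucc_iff.mpr hij)
    exact congrArg σ.obj h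
  have hv2 : (((nerve C).δ i.succ) σ).obj j = σ.obj j.castSucc := by
    have h : Fin.succAbove i.succ j = j.castSucc :=
      Fin.succAbove_of_castSucc_lt _ _ (Fin.castSucc_lt_succ_iff.mpr hij)
    exact congrArg σ.obj h
  refine Prod.ext ?_ ?_
  · dsimp only
    rw [hv1, hv2]
    have nat : ∀ (v : C) (m : ℕ) (k : Fin (m + 2)) (x : Y _⦋m + 1⦌),
        (δ v).app (Opposite.op (SimplexCategory.mk m)) (Y.δ k x) =
          Y.δ k ((δ v).app (Opposite.op (SimplexCategory.mk (m + 1))) x) := by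
      intro v m k x
      exact ConcreteCategory.congr_hom ((δ v).naturality (SimplexCategory.δ k).op) x
    simp only [nat]
    have hc : ∀ z : Y _⦋n + 2⦌,
        (δ (σ.obj i.succ)).app (Opposite.op (SimplexCategory.mk (n + 2)))
          ((δ (σ.obj j.castSucc)).app (Opposite.op (SimplexCategory.mk (n + 2))) z) =
        (δ (σ.obj j.castSucc)).app (Opposite.op (SimplexCategory.mk (n + 2)))
          ((δ (σ.obj i.succ)).app (Opposite.op (SimplexCategory.mk (n + 2))) z) := by
      intro z
      have := hcomm (σ.obj j.castSucc) (σ.obj i.succ)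
        (Or.inl ⟨σ.map (homOfLE (le_of_lt (Fin.castSucc_lt_succ_iff.mpr hij)))⟩)
      exact ConcreteCategory.congr_hom (congr_fun (congr_arg NatTrans.app this)
        (Opposite.op (SimplexCategory.mk (n + 2)))) z
    rw [hc]
    exact (ConcreteCategory.congr_hom (Y.δ_comp_δ hij) _).symm
  · dsimp only
    exact (ConcreteCategory.congr_hom ((nerve C).δ_comp_δ hij) σ).symm
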